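/- For every integer n ≥ 2, setting d = 2^⌊n/2⌋, there exist d×d density matrices ρ_x (x ∈ {0,1}^n) and Hermitian matrices M_t (t ∈ {1,…,n}) with 0 ⪯ M_t ⪯ I such that (i) for every S ⊆ {1,…,n} with |S| ≥ 2, Σ_{x : x_S = 0} ρ_x = Σ_{x : x_S = 1} ρ_x (parity-obliviousness), and (ii) for every x ∈ {0,1}^n and every t, Re tr(ρ_x M_t) = (1/2)(1 + (−1)^{x_t}/√n); in particular every bit x_t is decoded correctly with probability exactly (1/2)(1 + 1/√n), so the RAC has worst-case bias 1/√n on ⌊n/2⌋ qubits. -/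

import Mathlib

open Matrix BigOperators Finset
open scoped ComplexOrder

namespace QRACaux
set_option linter.unusedSectionVars false
set_option linter.unnecessarySeqFocus false

lemma zmod2_eq_one {v : ZMod 2} (h : v ≠ 0) : v = 1 := by revert h; revert v; decide
lemma zmod2_cases0 (v : ZMod 2) : v = 0 ∨ v = 1 := by revert v; decide
def chi (c : ZMod 2) : ℂ := if c = 0 then 1 else -1
lemma chi_add (u v : ZMod 2) : chi (u + v) = chi u * chi v := by
  rcases zmod2_cases0 u with rfl | rfl <;> rcases zmod2_cases0 v with rfl | rfl <;> norm_num [chi] <;> decide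
lemma chi_mul_self (u : ZMod 2) : chi u * chi u = 1 := by rcases zmod2_cases0 u with rfl | rfl <;> norm_num [chi]
lemma star_chi (u : ZMod 2) : star (chi u) = chi u := by rcases zmod2_cases0 u with rfl | rfl <;> simp [chi]
lemma chi_zero : chi 0 = 1 := rfl

variable {ι : Type*} [Fintype ι] [DecidableEq ι]
def dotp (b x : ι → ZMod 2) : ZMod 2 := ∑ i, b i * x i
lemma dotp_add_right (b x y : ι → ZMod 2) : dotp b (x + y) = dotp b x + dotp b y := by
  simp [dotp, mul_add, Finset.sum_add_distrib]
lemma dotp_add_left (b c x : ι → ZMod 2) : dotp (b + c) x = dotp b x + dotp c x := by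
  simp [dotp, add_mul, Finset.sum_add_distrib]
lemma dotp_single (b : ι → ZMod 2) (i : ι) : dotp b (Pi.single i 1) = b i := by
  simp [dotp, Pi.single_apply, mul_ite, Finset.sum_ite_eq']
lemma dotp_single_left (x : ι → ZMod 2) (i : ι) : dotp (Pi.single i 1) x = x i := by
  simp [dotp, Pi.single_apply, ite_mul, Finset.sum_ite_eq]

lemma sum_chi_dotp {b : ι → ZMod 2} (hb : b ≠ 0) :
    ∑ x : ι → ZMod 2, chi (dotp b x) = 0 := by
  obtain ⟨i, hi⟩ : ∃ i, b i ≠ 0 := by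
    by_contra h; push_neg at h; exact hb (funext h)
  have hbi : b i = 1 := zmod2_eq_one hi
  have key : ∑ x : ι → ZMod 2, chi (dotp b x)
      = ∑ x : ι → ZMod 2, chi (dotp b (x + Pi.single i 1)) :=
    (Fintype.sum_equiv (Equiv.addRight (Pi.single i 1)) _ _ (fun x => rfl)).symm
  have hneg : ∀ x : ι → ZMod 2, chi (dotp b (x + Pi.single i 1)) = - chi (dotp b x) := by
    intro x
    rw [dotp_add_right, chi_add, dotp_single, hbi]
    simp [chi]
  simp only [hneg, Finset.sum_neg_distrib] at key
  have h2 : (∑ x : ι → ZMod 2, chi (dotp b x)) + ∑ x : ι → ZMod 2, chi (dotp b x) = 0 := by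
    nth_rewrite 2 [key]; ring
  exact add_self_eq_zero.mp h2

/-- generalized Pauli (unnormalized, possibly non-Hermitian) -/
def Q (a b : ι → ZMod 2) : Matrix (ι → ZMod 2) (ι → ZMod 2) ℂ :=
  Matrix.of fun x y => chi (dotp b x) * (if y = x + a then 1 else 0)

lemma pi_add_self (a : ι → ZMod 2) : a + a = 0 := by
  funext i; exact CharTwo.add_self_eq_zero (a i)

lemma Q_mul (a b a' b' : ι → ZMod 2) :
    Q a b * Q a' b' = chi (dotp b' a) • Q (a + a') (b + b') := by
  ext x z
  simp only [Matrix.mul_apply, Q, Matrix.of_apply, Matrix.smul_apply, smul_eq_mul]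
  rw [Finset.sum_eq_single (x + a)]
  · rw [if_pos rfl, mul_one, dotp_add_right, dotp_add_left, chi_add, chi_add, ← add_assoc]
    split_ifs <;> ring
  · intro y _ hy
    rw [if_neg (fun h => hy h), mul_zero, zero_mul]
  · intro h; simp at h

lemma Q_conjTranspose (a b : ι → ZMod 2) : (Q a b)ᴴ = chi (dotp b a) • Q a b := by
  ext x y
  simp only [Matrix.conjTranspose_apply, Q, Matrix.of_apply, Matrix.smul_apply, smul_eq_mul]
  by_cases h : y = x + a
  · have hx : x = y + a := by rw [h]; rw [add_assoc, pi_add_self, add_zero]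
    rw [if_pos hx, if_pos h, h, dotp_add_right, chi_add]
    simp [star_chi]  -- star (chi (dotp b x) * 1)?
    ring
  · have hx : ¬ x = y + a := by
      intro hx; apply h; rw [hx, add_assoc, pi_add_self, add_zero]
    rw [if_neg hx, if_neg h]
    simp

lemma Q_zero_zero : (Q (0 : ι → ZMod 2) 0) = 1 := by
  ext x y
  simp [Q, dotp, chi_zero, Matrix.one_apply, eq_comm]

lemma trace_Q {a b : ι → ZMod 2} (h : ¬(a = 0 ∧ b = 0)) : (Q a b).trace = 0 := by
  by_cases ha : a = 0
  · have hb : b ≠ 0 := fun hb => h ⟨ha, hb⟩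
    simp only [Matrix.trace, Matrix.diag, Q, Matrix.of_apply, ha, add_zero, if_pos rfl, mul_one]
    simpa using sum_chi_dotp hb
  · simp only [Matrix.trace, Matrix.diag, Q, Matrix.of_apply]
    rw [Finset.sum_eq_zero]
    intro x _
    rw [if_neg, mul_zero]
    intro hx
    exact ha (by have := hx; nth_rewrite 1 [← add_zero x] at this; exact (add_left_cancel this.symm))


lemma zmod2_ne_zero_iff (v : ZMod 2) : ¬v = 0 ↔ v = 1 := by revert v; decide

lemma zmod2_cases (v : ZMod 2) : v = 0 ∨ v = 1 := by revert v; decide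

/-- phase -/
def ph (c : ZMod 2) : ℂ := if c = 0 then 1 else Complex.I

/-- Hermitian generalized Pauli -/
def A (a b : ι → ZMod 2) : Matrix (ι → ZMod 2) (ι → ZMod 2) ℂ := ph (dotp b a) • Q a b

lemma A_herm (a b : ι → ZMod 2) : (A a b)ᴴ = A a b := by
  rw [A, Matrix.conjTranspose_smul, Q_conjTranspose, smul_smul]
  congr 1
  rcases zmod2_cases (dotp b a) with h | h <;> rw [h] <;> simp [ph, chi]

lemma A_mul_self (a b : ι → ZMod 2) : A a b * A a b = 1 := by
  rw [A, Matrix.smul_mul, Matrix.mul_smul, Q_mul, pi_add_self, pi_add_self, Q_zero_zero,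
    smul_smul, smul_smul]
  have : ph (dotp b a) * ph (dotp b a) * chi (dotp b a) = 1 := by
    rcases zmod2_cases (dotp b a) with h | h <;> rw [h] <;>
      simp [ph, chi, Complex.I_mul_I]
  rw [this, one_smul]

lemma A_anticomm {a b a' b' : ι → ZMod 2} (h : dotp b a' + dotp b' a = 1) :
    A a b * A a' b' + A a' b' * A a b = 0 := by
  rw [A, A, Matrix.smul_mul, Matrix.mul_smul, Matrix.smul_mul, Matrix.mul_smul,
    Q_mul, Q_mul, smul_smul, smul_smul, smul_smul, smul_smul]
  have hcomm : a' + a = a + a' := by abel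
  have hcomm' : b' + b = b + b' := by abel
  rw [hcomm, hcomm', ← add_smul]
  have h2 : (dotp b a' = 0 ∧ dotp b' a = 1) ∨ (dotp b a' = 1 ∧ dotp b' a = 0) := by
    rcases zmod2_cases (dotp b a') with h1 | h1 <;> rcases zmod2_cases (dotp b' a) with h3 | h3 <;>
      rw [h1, h3] at h ⊢ <;> simp <;> exact absurd h (by decide)
  have : ph (dotp b a) * ph (dotp b' a') * chi (dotp b' a)
      + ph (dotp b' a') * ph (dotp b a) * chi (dotp b a') = 0 := by
    rcases h2 with ⟨h1, h3⟩ | ⟨h1, h3⟩ <;> rw [h1, h3] <;> simp [chi] <;> ring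
  rw [this, zero_smul]

lemma trace_A {a b : ι → ZMod 2} (h : ¬(a = 0 ∧ b = 0)) : (A a b).trace = 0 := by
  rw [A, Matrix.trace_smul, trace_Q h, smul_zero]

lemma trace_A_mul {a b a' b' : ι → ZMod 2} (h : dotp b a' + dotp b' a = 1) :
    (A a b * A a' b').trace = 0 := by
  rw [A, A, Matrix.smul_mul, Matrix.mul_smul, Q_mul, smul_smul, smul_smul, Matrix.trace_smul]
  rw [trace_Q, smul_zero]
  rintro ⟨ha, hb⟩
  have ha' : a = a' := by
    have := congrArg (· + a') ha
    simpa [add_assoc, pi_add_self] using this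
  have hb' : b = b' := by
    have := congrArg (· + b') hb
    simpa [add_assoc, pi_add_self] using this
  rw [ha', hb'] at h
  have h0 : dotp b' a' + dotp b' a' = 0 := by
    rcases zmod2_cases (dotp b' a') with h1 | h1 <;> rw [h1] <;> decide
  rw [h0] at h
  exact absurd h (by decide)


/-! ### The specific family of anticommuting Paulis -/

def av (m tv : ℕ) : Fin m → ZMod 2 := fun i => if i.val = tv / 2 then 1 else 0
def bv (m tv : ℕ) : Fin m → ZMod 2 := fun i => if 2 * i.val < tv then 1 else 0

lemma dotp_av (m tv : ℕ) (c : Fin m → ZMod 2) :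
    dotp c (av m tv) = if h : tv / 2 < m then c ⟨tv / 2, h⟩ else 0 := by
  split_ifs with h
  · have hav : av m tv = Pi.single (⟨tv / 2, h⟩ : Fin m) 1 := by
      funext i; simp [av, Pi.single_apply, Fin.ext_iff]
    rw [hav, dotp_single]
  · rw [dotp, Finset.sum_eq_zero]
    intro i _
    rw [av, if_neg (by omega), mul_zero]

lemma omega_one {n : ℕ} (hn : 2 ≤ n) (s t : Fin n) (hst : s ≠ t) :
    dotp (bv (n / 2) s.val) (av (n / 2) t.val) + dotp (bv (n / 2) t.val) (av (n / 2) s.val)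
      = 1 := by
  have hs := s.isLt
  have ht := t.isLt
  have hne : s.val ≠ t.val := fun h => hst (Fin.ext h)
  rw [dotp_av, dotp_av]
  simp only [bv]
  split_ifs <;> first | decide | (exfalso; omega) | (simp_all; omega)

lemma av_bv_ne_zero {n : ℕ} (hn : 2 ≤ n) (t : Fin n) :
    ¬(av (n / 2) t.val = 0 ∧ bv (n / 2) t.val = 0) := by
  rintro ⟨ha, hb⟩
  by_cases h : t.val / 2 < n / 2
  · have := congrFun ha ⟨t.val / 2, h⟩
    simp [av] at this
  · have h0 : (0 : ℕ) < n / 2 := by omega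
    have := congrFun hb ⟨0, h0⟩
    have htpos : 0 < t.val := by omega
    simp [bv, htpos] at this

/-! ### Positive semidefiniteness from Hermitian `C` with `C² = 2C` -/

lemma psd_smul_idem {V : Type*} [Fintype V] [DecidableEq V] {C : Matrix (Fin m → ZMod 2) (Fin m → ZMod 2) ℂ}
    (hH : Cᴴ = C) (hI : C * C = (2 : ℂ) • C) {r : ℝ} (hr : 0 ≤ r) :
    ((r : ℂ) • C).PosSemidef := by
  have h2 : (0 : ℝ) ≤ r / 2 := by linarith
  have key : (r : ℂ) • C
      = ((Real.sqrt (r / 2) : ℂ) • C)ᴴ * ((Real.sqrt (r / 2) : ℂ) • C) := by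
    rw [Matrix.conjTranspose_smul, hH, Matrix.smul_mul, Matrix.mul_smul, hI,
      smul_smul, smul_smul]
    congr 1
    rw [Complex.star_def, Complex.conj_ofReal]
    have hr2 : r = Real.sqrt (r / 2) * Real.sqrt (r / 2) * 2 := by
      rw [Real.mul_self_sqrt h2]; ring
    exact_mod_cast congrArg (fun y : ℝ => (y : ℂ)) hr2
  rw [key]
  exact Matrix.posSemidef_conjTranspose_mul_self _

end QRACaux

open QRACaux

/-- For every `n ≥ 2` there is a parity-oblivious quantum random access code
of `n` bits on `⌊n/2⌋` qubits (dimension `2^⌊n/2⌋`), together with a decoding strategy,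
in which every bit is decoded with probability exactly `(1/2)(1 + 1/√n)`; in particular
the worst-case bias is `1/√n`. -/
theorem exists_optimal_parity_oblivious_qrac (n : ℕ) (hn : 2 ≤ n) :
    ∃ (ρ : (Fin n → ZMod 2) → Matrix (Fin (2 ^ (n / 2))) (Fin (2 ^ (n / 2))) ℂ)
      (M : Fin n → Matrix (Fin (2 ^ (n / 2))) (Fin (2 ^ (n / 2))) ℂ),
      (∀ x, (ρ x).PosSemidef) ∧
      (∀ x, (ρ x).trace = 1) ∧
      (∀ t, (M t).IsHermitian) ∧
      (∀ t, (M t).PosSemidef) ∧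
      (∀ t, ((1 : Matrix (Fin (2 ^ (n / 2))) (Fin (2 ^ (n / 2))) ℂ) - M t).PosSemidef) ∧
      (∀ S : Finset (Fin n), 2 ≤ S.card →
        ∑ x ∈ Finset.univ.filter (fun x : Fin n → ZMod 2 => ∑ i ∈ S, x i = 0), ρ x =
        ∑ x ∈ Finset.univ.filter (fun x : Fin n → ZMod 2 => ∑ i ∈ S, x i = 1), ρ x) ∧
      (∀ (x : Fin n → ZMod 2) (t : Fin n),
        ((ρ x * M t).trace).re =
          (1 / 2) * (1 + (if x t = 0 then (1 : ℝ) else -1) / Real.sqrt n)) := by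
  classical
  set m : ℕ := n / 2 with hm
  have hcard : Fintype.card (Fin m → ZMod 2) = 2 ^ (n / 2) := by
    rw [Fintype.card_fun]
    simp [hm]
  let e : (Fin m → ZMod 2) ≃ Fin (2 ^ (n / 2)) := Fintype.equivFinOfCardEq hcard
  -- the anticommuting Hermitian involutions
  let AA : Fin n → Matrix (Fin m → ZMod 2) (Fin m → ZMod 2) ℂ := fun t => A (av m t.val) (bv m t.val)
  have hAherm : ∀ t, (AA t)ᴴ = AA t := fun t => A_herm _ _
  have hAsq : ∀ t, AA t * AA t = 1 := fun t => A_mul_self _ _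
  have hAanti : ∀ s t : Fin n, s ≠ t → AA s * AA t + AA t * AA s = 0 :=
    fun s t hst => A_anticomm (omega_one hn s t hst)
  have hAtr : ∀ t, (AA t).trace = 0 := fun t => trace_A (av_bv_ne_zero hn t)
  have hAtrmul : ∀ s t : Fin n, s ≠ t → (AA s * AA t).trace = 0 :=
    fun s t hst => trace_A_mul (omega_one hn s t hst)
  have htr1 : (1 : Matrix (Fin m → ZMod 2) (Fin m → ZMod 2) ℂ).trace = (2 ^ m : ℂ) := by
    rw [Matrix.trace_one, hcard]; push_cast [hm]; norm_num
  -- numerical facts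
  have hnpos : (0 : ℝ) < n := by positivity
  have hsq : Real.sqrt n ≠ 0 := by positivity
  set rr : ℝ := (Real.sqrt n)⁻¹ with hrr
  have hrrn : (rr : ℂ) * (rr : ℂ) * (n : ℂ) = 1 := by
    have : rr * rr * n = 1 := by
      rw [hrr, ← mul_inv, Real.mul_self_sqrt hnpos.le, inv_mul_cancel₀ hnpos.ne']
    exact_mod_cast this
  set cρ : ℝ := ((2 : ℝ) ^ m)⁻¹ with hcρ
  -- the signed sum of Paulis
  let B : (Fin n → ZMod 2) → Matrix (Fin m → ZMod 2) (Fin m → ZMod 2) ℂ := fun x => ∑ t, chi (x t) • AA t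
  have hBherm : ∀ x, (B x)ᴴ = B x := by
    intro x
    simp only [B, Matrix.conjTranspose_sum, Matrix.conjTranspose_smul]
    exact Finset.sum_congr rfl fun t _ => by rw [star_chi, hAherm]
  have hBsq : ∀ x, B x * B x = (n : ℂ) • 1 := by
    intro x
    have expand : B x * B x = ∑ s, ∑ t, (chi (x s) * chi (x t)) • (AA s * AA t) := by
      rw [Finset.sum_mul_sum]
      exact Finset.sum_congr rfl fun s _ => Finset.sum_congr rfl fun t _ => by
        rw [Matrix.smul_mul, Matrix.mul_smul, smul_smul]
    have comm : ∑ s, ∑ t, (chi (x s) * chi (x t)) • (AA s * AA t)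
        = ∑ s, ∑ t, (chi (x t) * chi (x s)) • (AA t * AA s) := Finset.sum_comm
    have hterm : ∀ s t : Fin n, (chi (x s) * chi (x t)) • (AA s * AA t)
        + (chi (x t) * chi (x s)) • (AA t * AA s)
        = if s = t then (2 : ℂ) • (1 : Matrix (Fin m → ZMod 2) (Fin m → ZMod 2) ℂ) else 0 := by
      intro s t
      by_cases hst : s = t
      · subst hst
        rw [if_pos rfl, chi_mul_self, hAsq, one_smul, two_smul]
      · rw [if_neg hst, mul_comm (chi (x t)), ← smul_add, hAanti s t hst, smul_zero]
    have hdub : B x * B x + B x * B x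
        = ∑ s, ∑ t, ((chi (x s) * chi (x t)) • (AA s * AA t)
            + (chi (x t) * chi (x s)) • (AA t * AA s)) := by
      rw [expand]
      nth_rewrite 2 [comm]
      simp only [← Finset.sum_add_distrib]
    have hfin : (2 : ℂ) • (B x * B x) = (2 : ℂ) • ((n : ℂ) • 1) := by
      rw [two_smul, hdub]
      simp only [hterm, Finset.sum_ite_eq, Finset.mem_univ, if_pos]
      rw [Finset.sum_const, Finset.card_univ, Fintype.card_fin,
        ← Nat.cast_smul_eq_nsmul ℂ, smul_smul, smul_smul, mul_comm]
    exact smul_right_injective _ two_ne_zero hfin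
  have hBtr : ∀ x, (B x).trace = 0 := by
    intro x
    simp only [B, Matrix.trace_sum, Matrix.trace_smul, hAtr, smul_zero, Finset.sum_const_zero]
  have hBAtr : ∀ x t, (B x * AA t).trace = chi (x t) * (2 ^ m : ℂ) := by
    intro x t
    have : B x * AA t = ∑ s, chi (x s) • (AA s * AA t) := by
      rw [Finset.sum_mul]
      exact Finset.sum_congr rfl fun s _ => Matrix.smul_mul _ _ _
    rw [this, Matrix.trace_sum, Finset.sum_eq_single t]
    · rw [Matrix.trace_smul, hAsq, htr1, smul_eq_mul]
    · intro s _ hs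
      rw [Matrix.trace_smul, hAtrmul s t hs, smul_zero]
    · intro h
      simp at h
  -- states and measurements over V
  set ρ₀ : (Fin n → ZMod 2) → Matrix (Fin m → ZMod 2) (Fin m → ZMod 2) ℂ :=
    fun x => (cρ : ℂ) • (1 + (rr : ℂ) • B x) with hρ₀
  set M₀ : Fin n → Matrix (Fin m → ZMod 2) (Fin m → ZMod 2) ℂ :=
    fun t => ((1 / 2 : ℝ) : ℂ) • (1 + AA t) with hM₀
  have hcρnn : (0 : ℝ) ≤ cρ := by positivity
  have hCherm : ∀ x, (1 + (rr : ℂ) • B x)ᴴ = 1 + (rr : ℂ) • B x := by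
    intro x
    simp [Matrix.conjTranspose_add, Matrix.conjTranspose_smul, hBherm, Complex.star_def,
      Complex.conj_ofReal]
  have hCsq : ∀ x, (1 + (rr : ℂ) • B x) * (1 + (rr : ℂ) • B x)
      = (2 : ℂ) • (1 + (rr : ℂ) • B x) := by
    intro x
    have hq : ((rr : ℂ) • B x) * ((rr : ℂ) • B x) = 1 := by
      rw [Matrix.smul_mul, Matrix.mul_smul, hBsq, smul_smul, smul_smul, hrrn, one_smul]
    simp only [mul_add, add_mul, one_mul, mul_one, hq, two_smul, smul_add]
    abel
  have hρpsd : ∀ x, (ρ₀ x).PosSemidef := by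
    intro x
    simp only [hρ₀]
    exact psd_smul_idem (V := Fin m → ZMod 2) (C := 1 + (rr : ℂ) • B x) (r := cρ) (hCherm x) (hCsq x) hcρnn
  have hρtr : ∀ x, (ρ₀ x).trace = 1 := by
    intro x
    simp only [hρ₀]
    rw [Matrix.trace_smul, Matrix.trace_add, htr1, Matrix.trace_smul, hBtr x, smul_zero,
      add_zero, smul_eq_mul, hcρ]
    push_cast
    field_simp
  have hMherm : ∀ t, (M₀ t)ᴴ = M₀ t := by
    intro t
    simp [hM₀, Matrix.conjTranspose_add, Matrix.conjTranspose_smul, hAherm, Complex.star_def,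
      Complex.conj_ofReal]
  have hMpsd : ∀ t, (M₀ t).PosSemidef := by
    intro t
    have hh : (1 + AA t)ᴴ = 1 + AA t := by
      rw [Matrix.conjTranspose_add, Matrix.conjTranspose_one, hAherm]
    have hs : (1 + AA t) * (1 + AA t) = (2 : ℂ) • (1 + AA t) := by
      simp only [mul_add, add_mul, one_mul, mul_one, hAsq, two_smul, smul_add]
      abel
    simp only [hM₀]
    exact psd_smul_idem (V := Fin m → ZMod 2) hh hs (show (0:ℝ) ≤ 1/2 by norm_num)
  have hMcomp : ∀ t, (1 : Matrix (Fin m → ZMod 2) (Fin m → ZMod 2) ℂ) - M₀ t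
      = ((1 / 2 : ℝ) : ℂ) • (1 - AA t) := by
    intro t
    simp only [hM₀]
    rw [show ((1 / 2 : ℝ) : ℂ) = (2 : ℂ)⁻¹ by push_cast; ring]
    module
  have hMcompPsd : ∀ t, ((1 : Matrix (Fin m → ZMod 2) (Fin m → ZMod 2) ℂ) - M₀ t).PosSemidef := by
    intro t
    rw [hMcomp]
    have hh : (1 - AA t)ᴴ = 1 - AA t := by
      rw [Matrix.conjTranspose_sub, Matrix.conjTranspose_one, hAherm]
    have hs : (1 - AA t) * (1 - AA t) = (2 : ℂ) • (1 - AA t) := by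
      simp only [mul_sub, sub_mul, one_mul, mul_one, hAsq, two_smul, smul_sub]
      abel
    exact psd_smul_idem (V := Fin m → ZMod 2) hh hs (show (0:ℝ) ≤ 1/2 by norm_num)
  -- parity obliviousness over the abstract index type
  have hparity0 : ∀ S : Finset (Fin n), 2 ≤ S.card →
      ∑ x : Fin n → ZMod 2, chi (∑ i ∈ S, x i) • ρ₀ x = 0 := by
    intro S hS
    set c : Fin n → ZMod 2 := fun i => if i ∈ S then 1 else 0 with hc
    have hpx : ∀ x : Fin n → ZMod 2, (∑ i ∈ S, x i) = dotp c x := by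
      intro x
      simp only [dotp, hc, ite_mul, one_mul, zero_mul, Finset.sum_ite_mem, Finset.univ_inter]
    have hc0 : c ≠ 0 := by
      obtain ⟨i, hi⟩ := Finset.card_pos.mp (by omega : 0 < S.card)
      intro h
      have := congrFun h i
      simp [hc, hi] at this
    have hct : ∀ t : Fin n, c + Pi.single t 1 ≠ 0 := by
      intro t h
      obtain ⟨i, hiS, hit⟩ : ∃ i ∈ S, i ≠ t := by
        by_contra hcon
        push_neg at hcon
        have hsub : S ⊆ {t} := fun j hj => Finset.mem_singleton.mpr (hcon j hj)
        have := Finset.card_le_card hsub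
        simp at this
        omega
      have := congrFun h i
      simp [hc, hiS, Pi.single_apply, hit] at this
    have hexp : ∀ x : Fin n → ZMod 2, chi (dotp c x) • ρ₀ x
        = (chi (dotp c x) * (cρ : ℂ)) • (1 : Matrix (Fin m → ZMod 2) (Fin m → ZMod 2) ℂ)
          + ∑ t, ((cρ : ℂ) * (rr : ℂ) * chi (dotp (c + Pi.single t 1) x)) • AA t := by
      intro x
      simp only [hρ₀]
      rw [smul_smul, smul_add]
      congr 1
      rw [smul_smul, Finset.smul_sum]
      refine Finset.sum_congr rfl fun t _ => ?_
      rw [smul_smul, dotp_add_left, chi_add, dotp_single_left]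
      congr 1
      ring
    rw [show (∑ x : Fin n → ZMod 2, chi (∑ i ∈ S, x i) • ρ₀ x)
        = ∑ x : Fin n → ZMod 2, chi (dotp c x) • ρ₀ x from
      Finset.sum_congr rfl fun x _ => by rw [hpx x]]
    rw [Finset.sum_congr rfl fun x _ => hexp x, Finset.sum_add_distrib]
    have p1 : ∑ x : Fin n → ZMod 2,
        (chi (dotp c x) * (cρ : ℂ)) • (1 : Matrix (Fin m → ZMod 2) (Fin m → ZMod 2) ℂ) = 0 := by
      rw [← Finset.sum_smul, ← Finset.sum_mul, sum_chi_dotp hc0, zero_mul, zero_smul]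
    have p2 : ∑ x : Fin n → ZMod 2,
        ∑ t, ((cρ : ℂ) * (rr : ℂ) * chi (dotp (c + Pi.single t 1) x)) • AA t = 0 := by
      rw [Finset.sum_comm]
      refine Finset.sum_eq_zero fun t _ => ?_
      rw [← Finset.sum_smul, ← Finset.mul_sum, sum_chi_dotp (hct t), mul_zero, zero_smul]
    rw [p1, p2, add_zero]
  -- the decoding value over the abstract index type
  have hval : ∀ (x : Fin n → ZMod 2) (t : Fin n), (ρ₀ x * M₀ t).trace
      = (((1 / 2) * (1 + (if x t = 0 then (1 : ℝ) else -1) / Real.sqrt n) : ℝ) : ℂ) := by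
    intro x t
    have hprod : ρ₀ x * M₀ t
        = ((cρ : ℂ) * ((1 / 2 : ℝ) : ℂ)) • ((1 + (rr : ℂ) • B x) * (1 + AA t)) := by
      simp only [hρ₀, hM₀]
      rw [Matrix.smul_mul, Matrix.mul_smul, smul_smul]
    have hexp : (1 + (rr : ℂ) • B x) * (1 + AA t)
        = 1 + AA t + (rr : ℂ) • B x + (rr : ℂ) • (B x * AA t) := by
      simp only [mul_add, add_mul, one_mul, mul_one, Matrix.smul_mul]
      abel
    rw [hprod, Matrix.trace_smul, hexp, Matrix.trace_add, Matrix.trace_add, Matrix.trace_add,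
      htr1, hAtr, Matrix.trace_smul, Matrix.trace_smul, hBtr, hBAtr, smul_zero, add_zero,
      add_zero, smul_eq_mul, smul_eq_mul]
    have h2m : ((2 : ℂ) ^ m) ≠ 0 := by positivity
    have hchi : chi (x t) = ((if x t = 0 then (1 : ℝ) else -1 : ℝ) : ℂ) := by
      by_cases hx : x t = 0 <;> simp [chi, hx]
    rw [hchi, hcρ, hrr]
    by_cases hx : x t = 0 <;> simp only [hx, if_pos, if_neg, if_true] <;> push_cast <;>
      field_simp <;> ring
  -- transfer along the equivalence
  have htrsub : ∀ X : Matrix (Fin m → ZMod 2) (Fin m → ZMod 2) ℂ,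
      (X.submatrix e.symm e.symm).trace = X.trace := by
    intro X
    rw [Matrix.trace, Matrix.trace]
    exact Fintype.sum_equiv e.symm _ _ fun i => rfl
  have hsumsub : ∀ (s : Finset (Fin n → ZMod 2))
      (f : (Fin n → ZMod 2) → Matrix (Fin m → ZMod 2) (Fin m → ZMod 2) ℂ),
      ∑ x ∈ s, (f x).submatrix e.symm e.symm = (∑ x ∈ s, f x).submatrix e.symm e.symm := by
    intro s f
    ext i j
    simp [Matrix.submatrix_apply, Matrix.sum_apply]
  refine ⟨fun x => (ρ₀ x).submatrix e.symm e.symm, fun t => (M₀ t).submatrix e.symm e.symm,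
    fun x => (hρpsd x).submatrix _, fun x => by rw [htrsub, hρtr], 
    fun t => Matrix.IsHermitian.submatrix (hMherm t) _, fun t => (hMpsd t).submatrix _,
    ?_, ?_, ?_⟩
  · intro t
    dsimp only
    have hre : (1 : Matrix (Fin (2 ^ (n / 2))) (Fin (2 ^ (n / 2))) ℂ)
          - (M₀ t).submatrix ⇑e.symm ⇑e.symm
        = ((1 - M₀ t).submatrix ⇑e.symm ⇑e.symm) := by
      ext i j
      simp [Matrix.sub_apply, Matrix.one_apply, Matrix.submatrix_apply]
    rw [hre]
    exact (hMcompPsd t).submatrix _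
  · intro S hS
    have key := hparity0 S hS
    have hsplit := Finset.sum_filter_add_sum_filter_not (Finset.univ : Finset (Fin n → ZMod 2))
      (fun x => (∑ i ∈ S, x i) = 0) (fun x => chi (∑ i ∈ S, x i) • ρ₀ x)
    rw [← hsplit] at key
    have h1 : ∑ x ∈ Finset.univ.filter (fun x : Fin n → ZMod 2 => (∑ i ∈ S, x i) = 0),
        chi (∑ i ∈ S, x i) • ρ₀ x
        = ∑ x ∈ Finset.univ.filter (fun x : Fin n → ZMod 2 => (∑ i ∈ S, x i) = 0), ρ₀ x := by
      refine Finset.sum_congr rfl fun x hx => ?_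
      rw [(Finset.mem_filter.mp hx).2, chi_zero, one_smul]
    have h2 : ∑ x ∈ Finset.univ.filter (fun x : Fin n → ZMod 2 => ¬(∑ i ∈ S, x i) = 0),
        chi (∑ i ∈ S, x i) • ρ₀ x
        = -∑ x ∈ Finset.univ.filter (fun x : Fin n → ZMod 2 => ¬(∑ i ∈ S, x i) = 0), ρ₀ x := by
      rw [← Finset.sum_neg_distrib]
      refine Finset.sum_congr rfl fun x hx => ?_
      rw [zmod2_eq_one (Finset.mem_filter.mp hx).2]
      rw [show chi 1 = -1 from by norm_num [chi]]
      exact neg_one_smul ℂ _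
    rw [h1, h2] at key
    have hone : ∑ x ∈ Finset.univ.filter (fun x : Fin n → ZMod 2 => (∑ i ∈ S, x i) = 0), ρ₀ x
        = ∑ x ∈ Finset.univ.filter (fun x : Fin n → ZMod 2 => ¬(∑ i ∈ S, x i) = 0), ρ₀ x := by
      rwa [add_neg_eq_zero] at key
    have hfe : Finset.univ.filter (fun x : Fin n → ZMod 2 => ¬(∑ i ∈ S, x i) = 0)
        = Finset.univ.filter (fun x : Fin n → ZMod 2 => (∑ i ∈ S, x i) = 1) :=
      Finset.filter_congr fun x _ => zmod2_ne_zero_iff _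
    rw [hsumsub, hsumsub, ← hfe]
    exact congrArg (fun X : Matrix (Fin m → ZMod 2) (Fin m → ZMod 2) ℂ =>
      X.submatrix e.symm e.symm) hone
  · intro x t
    rw [Matrix.submatrix_mul_equiv, htrsub, hval]
    exact Complex.ofReal_re _
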